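/- For the binomial matrix M(n) with det M(n) = 1, the minors satisfy the recursion Δ(n)_i^j = Δ(n−1)_i^j + binomial(n−1,i)·binomial(n−1,j) for all 0 ≤ i, j ≤ n−2. -/

import Mathlib

/-- The binomial matrix with entry `(u+v).choose u`. -/
def M (n : ℕ) : Matrix (Fin n) (Fin n) ℤ :=
  Matrix.of fun u v => (((u : ℕ) + (v : ℕ)).choose (u : ℕ) : ℤ)

open Finset Matrix

/-- The lower-triangular Pascal matrix. -/
def L (n : ℕ) : Matrix (Fin n) (Fin n) ℤ :=
  Matrix.of fun u v => ((u : ℕ).choose (v : ℕ) : ℤ)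

/-- The inverse of the lower-triangular Pascal matrix. -/
def L' (n : ℕ) : Matrix (Fin n) (Fin n) ℤ :=
  Matrix.of fun u v => (-1) ^ ((u : ℕ) + (v : ℕ)) * ((u : ℕ).choose (v : ℕ) : ℤ)

/-- Vandermonde in the form `∑ C(u,k) C(v,k) = C(u+v,u)` (ℕ version). -/
lemma sum_choose_mul_choose (u v n : ℕ) (hu : u < n) :
    ∑ k ∈ range n, u.choose k * v.choose k = (u + v).choose u := by
  have hsub : ∑ k ∈ range n, u.choose k * v.choose k
      = ∑ k ∈ range (u + 1), u.choose k * v.choose k := by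
    refine (Finset.sum_subset (by simp [Nat.succ_le_of_lt hu]) ?_).symm
    intro k _ hk
    simp only [mem_range, not_lt] at hk
    rw [Nat.choose_eq_zero_of_lt (by omega), zero_mul]
  rw [hsub, Nat.add_choose_eq u v u, Finset.Nat.sum_antidiagonal_eq_sum_range_succ_mk]
  rw [← Finset.sum_range_reflect]
  refine Finset.sum_congr rfl fun k hk => ?_
  simp only [mem_range] at hk
  have hk' : k ≤ u := by omega
  rw [Nat.add_sub_cancel, Nat.choose_symm hk']

/-- The alternating orthogonality identity over ℤ. -/
lemma alt_sum_choose (u v n : ℕ) (hu : u < n) :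
    ∑ k ∈ range n, (u.choose k : ℤ) * ((-1) ^ (k + v) * (k.choose v : ℤ))
      = if u = v then 1 else 0 := by
  have hsub : ∑ k ∈ range n, (u.choose k : ℤ) * ((-1) ^ (k + v) * (k.choose v : ℤ))
      = ∑ k ∈ range (u + 1), (u.choose k : ℤ) * ((-1) ^ (k + v) * (k.choose v : ℤ)) := by
    refine (Finset.sum_subset (by simp [Nat.succ_le_of_lt hu]) ?_).symm
    intro k _ hk
    simp only [mem_range, not_lt] at hk
    rw [Nat.choose_eq_zero_of_lt (by omega)]
    simp
  rw [hsub]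
  rcases lt_or_ge u v with huv | hvu
  · rw [if_neg (by omega)]
    refine Finset.sum_eq_zero fun k hk => ?_
    simp only [mem_range] at hk
    rw [Nat.choose_eq_zero_of_lt (show k < v by omega)]
    simp
  · -- v ≤ u : split the range at v
    have hsplit : range (u + 1) = range v ∪ Finset.Ico v (u + 1) := by
      rw [Finset.range_eq_Ico, Finset.range_eq_Ico]
      exact (Finset.Ico_union_Ico_eq_Ico (Nat.zero_le v) (by omega)).symm
    rw [hsplit, Finset.sum_union (by
      rw [Finset.range_eq_Ico]
      exact Finset.Ico_disjoint_Ico_consecutive 0 v (u + 1))]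
    have h1 : ∑ k ∈ range v, (u.choose k : ℤ) * ((-1) ^ (k + v) * (k.choose v : ℤ)) = 0 := by
      refine Finset.sum_eq_zero fun k hk => ?_
      simp only [mem_range] at hk
      rw [Nat.choose_eq_zero_of_lt hk]
      simp
    rw [h1, zero_add, Finset.sum_Ico_eq_sum_range]
    have h2 : ∀ j ∈ range (u + 1 - v),
        (u.choose (v + j) : ℤ) * ((-1) ^ (v + j + v) * ((v + j).choose v : ℤ))
          = (u.choose v : ℤ) * ((-1) ^ j * ((u - v).choose j : ℤ)) := by
      intro j hj
      simp only [mem_range] at hj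
      have hle : v + j ≤ u := by omega
      have hmul : u.choose (v + j) * (v + j).choose v = u.choose v * (u - v).choose (v + j - v) :=
        Nat.choose_mul (by omega)
      rw [Nat.add_sub_cancel_left] at hmul
      have hsign : ((-1 : ℤ)) ^ (v + j + v) = (-1) ^ j := by
        rw [show v + j + v = 2 * v + j by ring, pow_add, pow_mul]
        simp
      rw [hsign]
      ring_nf
      rw [← Nat.cast_mul, ← Nat.cast_mul, hmul]
    rw [Finset.sum_congr rfl h2, ← Finset.mul_sum]
    have hrange : u + 1 - v = (u - v) + 1 := by omega
    rw [hrange, Int.alternating_sum_range_choose]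
    rcases eq_or_ne u v with h | h
    · subst h; simp
    · rw [if_neg (by omega), if_neg h, mul_zero]

lemma M_eq (n : ℕ) : M n = L n * (L n)ᵀ := by
  ext u v
  simp only [M, L, Matrix.mul_apply, Matrix.transpose_apply, Matrix.of_apply]
  rw [Fin.sum_univ_eq_sum_range (fun k => ((u : ℕ).choose k : ℤ) * ((v : ℕ).choose k : ℤ))]
  rw [show ∑ k ∈ range n, ((u : ℕ).choose k : ℤ) * ((v : ℕ).choose k : ℤ)
      = ((∑ k ∈ range n, (u : ℕ).choose k * (v : ℕ).choose k : ℕ) : ℤ) by push_cast; ring_nf]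
  rw [sum_choose_mul_choose _ _ _ u.isLt]

lemma L_mul_L' (n : ℕ) : L n * L' n = 1 := by
  ext u v
  simp only [L, L', Matrix.mul_apply, Matrix.of_apply, Matrix.one_apply]
  rw [Fin.sum_univ_eq_sum_range
    (fun k => ((u : ℕ).choose k : ℤ) * ((-1) ^ (k + (v : ℕ)) * ((k).choose (v : ℕ) : ℤ)))]
  rw [alt_sum_choose _ _ _ u.isLt]
  simp [Fin.ext_iff]

lemma det_L (n : ℕ) : (L n).det = 1 := by
  have htri : (L n).BlockTriangular OrderDual.toDual := by
    intro u v huv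
    simp only [OrderDual.toDual_lt_toDual] at huv
    simp only [L, Matrix.of_apply]
    rw [Nat.choose_eq_zero_of_lt (by exact_mod_cast huv)]
    simp
  rw [Matrix.det_of_lowerTriangular _ htri]
  simp [L]

lemma det_M (n : ℕ) : (M n).det = 1 := by
  rw [M_eq, Matrix.det_mul, Matrix.det_transpose, det_L, mul_one]

lemma adjugate_M (n : ℕ) : (M n).adjugate = (L' n)ᵀ * L' n := by
  have h1 : L n * L' n = 1 := L_mul_L' n
  have h2 : L' n * L n = 1 := mul_eq_one_comm.mp h1
  have hMX : M n * ((L' n)ᵀ * L' n) = 1 := by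
    rw [M_eq]
    calc L n * (L n)ᵀ * ((L' n)ᵀ * L' n)
        = L n * ((L' n * L n)ᵀ * L' n) := by
          rw [Matrix.transpose_mul]; noncomm_ring
      _ = 1 := by rw [h2, Matrix.transpose_one, one_mul, h1]
  have hXM : ((L' n)ᵀ * L' n) * M n = 1 := mul_eq_one_comm.mp hMX
  calc (M n).adjugate = (((L' n)ᵀ * L' n) * M n) * (M n).adjugate := by rw [hXM, one_mul]
    _ = ((L' n)ᵀ * L' n) * (M n * (M n).adjugate) := by rw [Matrix.mul_assoc]
    _ = ((L' n)ᵀ * L' n) * ((M n).det • 1) := by rw [Matrix.mul_adjugate]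
    _ = (L' n)ᵀ * L' n := by rw [det_M]; simp

/-- Closed form for the minors of the binomial matrix. -/
lemma minor_closed_form (n : ℕ) (i j : Fin (n + 1)) :
    ((M (n + 1)).submatrix i.succAbove j.succAbove).det
      = ∑ k : Fin (n + 1), ((k : ℕ).choose (i : ℕ) : ℤ) * ((k : ℕ).choose (j : ℕ) : ℤ) := by
  have hadj := Matrix.adjugate_fin_succ_eq_det_submatrix (M (n + 1)) j i
  have hsq : ((-1 : ℤ)) ^ ((i : ℕ) + (j : ℕ)) * ((-1) ^ ((i : ℕ) + (j : ℕ))) = 1 := by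
    rw [← pow_add]
    exact Even.neg_one_pow ⟨(i : ℕ) + (j : ℕ), by ring⟩
  have : ((M (n + 1)).submatrix i.succAbove j.succAbove).det
      = (-1) ^ ((i : ℕ) + (j : ℕ)) * (M (n + 1)).adjugate j i := by
    rw [hadj, ← mul_assoc, hsq, one_mul]
  rw [this, adjugate_M]
  simp only [Matrix.mul_apply, Matrix.transpose_apply, L', Matrix.of_apply]
  rw [Finset.mul_sum]
  refine Finset.sum_congr rfl fun k _ => ?_
  have hsigns : ((-1 : ℤ)) ^ ((i : ℕ) + (j : ℕ)) * ((-1) ^ ((k : ℕ) + (j : ℕ))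
      * (-1) ^ ((k : ℕ) + (i : ℕ))) = 1 := by
    rw [← pow_add, ← pow_add]
    exact Even.neg_one_pow ⟨(i : ℕ) + (j : ℕ) + (k : ℕ), by ring⟩
  calc ((-1 : ℤ)) ^ ((i : ℕ) + (j : ℕ))
        * ((-1) ^ ((k : ℕ) + (j : ℕ)) * ((k : ℕ).choose (j : ℕ) : ℤ)
          * ((-1) ^ ((k : ℕ) + (i : ℕ)) * ((k : ℕ).choose (i : ℕ) : ℤ)))
      = ((-1 : ℤ)) ^ ((i : ℕ) + (j : ℕ)) * ((-1) ^ ((k : ℕ) + (j : ℕ))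
          * (-1) ^ ((k : ℕ) + (i : ℕ)))
          * (((k : ℕ).choose (i : ℕ) : ℤ) * ((k : ℕ).choose (j : ℕ) : ℤ)) := by ring
    _ = ((k : ℕ).choose (i : ℕ) : ℤ) * ((k : ℕ).choose (j : ℕ) : ℤ) := by
        rw [hsigns, one_mul]

/-- The minors of the binomial matrix satisfy
`Δ(n)_i^j = Δ(n-1)_i^j + (n-1).choose i * (n-1).choose j` for `0 ≤ i, j ≤ n - 2`
(here the matrix size `n` is `n+2`). -/
theorem minor_recursion (n : ℕ) (i j : Fin (n + 1)) :
    ((M (n + 2)).submatrix i.castSucc.succAbove j.castSucc.succAbove).det =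
      ((M (n + 1)).submatrix i.succAbove j.succAbove).det +
        ((n + 1).choose (i : ℕ) : ℤ) * ((n + 1).choose (j : ℕ) : ℤ) := by
  rw [minor_closed_form (n + 1) i.castSucc j.castSucc, minor_closed_form n i j,
    Fin.sum_univ_castSucc]
  simp [Fin.coe_castSucc, Fin.val_last]
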